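/- Let Q ⊆ [0,1] be countable and P a martingale measure on ℝ^Q. Then P is Lipschitz-Markov (for all s < t in Q and f ∈ Lip₁ there exists g ∈ Lip₁ with E_P[f(S_t) | F_s] = g(S_s) a.s.) if and only if for all f ∈ Lip₁, all s < t in Q, and all non-negative bounded F_s-measurable X, Y: E_P[X f(S_t)]·E_P[Y] − E_P[X]·E_P[Y f(S_t)] ≤ ∫∫ X(ω) Y(ω̄) |ω_s − ω̄_s| d(P⊗P)(ω, ω̄). -/

import Mathlib

open MeasureTheory Set Filter

lemma integrable_lip_comp {α : Type*} [MeasurableSpace α] {μ : Measure α}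
    [IsFiniteMeasure μ] {f : ℝ → ℝ} (hf : LipschitzWith 1 f) {u : α → ℝ}
    (hu : Integrable u μ) : Integrable (fun a => f (u a)) μ := by
  refine Integrable.mono' ((integrable_const |f 0|).add hu.abs)
    (hf.continuous.comp_aestronglyMeasurable hu.1) ?_
  refine Eventually.of_forall fun a => ?_
  have h1 := hf.dist_le_mul (u a) 0
  simp only [Real.dist_eq, sub_zero, one_mul, NNReal.coe_one] at h1
  have h2 : |f (u a)| - |f 0| ≤ |f (u a) - f 0| := abs_sub_abs_le_abs_sub _ _
  simp only [Real.norm_eq_abs, Pi.add_apply]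
  linarith

lemma integral_mul_condexp' {α : Type*} {m m0 : MeasurableSpace α} (hm : m ≤ m0)
    {μ : Measure α} [IsProbabilityMeasure μ] {X F : α → ℝ}
    (hX : Measurable[m] X) {C : ℝ} (hC : ∀ a, |X a| ≤ C)
    (hF : Integrable F μ) :
    ∫ a, X a * F a ∂μ = ∫ a, X a * (μ[F|m]) a ∂μ := by
  have hXs : StronglyMeasurable[m] X := hX.stronglyMeasurable
  have hXm0 : AEStronglyMeasurable X μ := (hXs.mono hm).aestronglyMeasurable
  have hXF : Integrable (fun a => X a * F a) μ :=
    hF.bdd_mul hXm0 (Eventually.of_forall fun a => hC a)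
  have h1 : ∫ a, X a * F a ∂μ = ∫ a, (μ[fun a => X a * F a|m]) a ∂μ :=
    (integral_condExp hm).symm
  rw [h1]
  refine integral_congr_ae ?_
  have h2 := condExp_mul_of_stronglyMeasurable_left hXs (by exact hXF) hF
  filter_upwards [h2] with a ha
  exact ha

lemma exists_lip_extension (S : Set (ℝ × ℝ)) (hS : S.Nonempty)
    (hA : ∀ p ∈ S, ∀ q ∈ S, p.2 - q.2 ≤ |p.1 - q.1|) :
    ∃ g : ℝ → ℝ, LipschitzWith 1 g ∧ ∀ p ∈ S, g p.1 = p.2 := by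
  obtain ⟨p₀, hp₀⟩ := hS
  set g : ℝ → ℝ := fun x => sSup ((fun q : ℝ × ℝ => q.2 - |x - q.1|) '' S) with hgdef
  have hbdd : ∀ x : ℝ, BddAbove ((fun q : ℝ × ℝ => q.2 - |x - q.1|) '' S) := by
    intro x
    refine ⟨p₀.2 + |p₀.1 - x|, ?_⟩
    rintro y ⟨q, hq, rfl⟩
    dsimp only
    have h1 := hA q hq p₀ hp₀
    have h2 : |q.1 - p₀.1| ≤ |q.1 - x| + |x - p₀.1| := abs_sub_le _ _ _
    have h3 : |q.1 - x| = |x - q.1| := abs_sub_comm _ _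
    have h4 : |x - p₀.1| = |p₀.1 - x| := abs_sub_comm _ _
    linarith
  have hne : ∀ x : ℝ, ((fun q : ℝ × ℝ => q.2 - |x - q.1|) '' S).Nonempty :=
    fun x => ⟨_, ⟨p₀, hp₀, rfl⟩⟩
  have hval : ∀ p ∈ S, g p.1 = p.2 := by
    intro p hp
    refine le_antisymm ?_ ?_
    · refine csSup_le (hne p.1) ?_
      rintro y ⟨q, hq, rfl⟩
      dsimp only
      have h1 := hA q hq p hp
      have h2 : |q.1 - p.1| = |p.1 - q.1| := abs_sub_comm _ _
      linarith
    · have := le_csSup (hbdd p.1) (mem_image_of_mem _ hp)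
      simpa using this
  have key : ∀ x y : ℝ, g x ≤ g y + |x - y| := by
    intro x y
    refine csSup_le (hne x) ?_
    rintro z ⟨q, hq, rfl⟩
    dsimp only
    have h1 : q.2 - |y - q.1| ≤ g y := le_csSup (hbdd y) (mem_image_of_mem _ hq)
    have h2 : |y - q.1| ≤ |y - x| + |x - q.1| := abs_sub_le _ _ _
    have h3 : |y - x| = |x - y| := abs_sub_comm _ _
    linarith
  refine ⟨g, ?_, hval⟩
  refine LipschitzWith.of_dist_le_mul fun x y => ?_
  rw [NNReal.coe_one, one_mul, Real.dist_eq, Real.dist_eq, abs_sub_le_iff]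
  constructor
  · have := key x y; linarith
  · have := key y x
    have h3 : |y - x| = |x - y| := abs_sub_comm _ _
    linarith

lemma ae_mem_supp {X : Type*} [MetricSpace X] [SecondCountableTopology X] [MeasurableSpace X]
    [OpensMeasurableSpace X] (κ : Measure X) :
    κ {p | ¬ ∀ ε : ℝ, 0 < ε → 0 < κ (Metric.ball p ε)} = 0 := by
  refine measure_null_of_locally_null _ fun x hx => ?_
  simp only [mem_setOf_eq, not_forall, not_lt] at hx
  obtain ⟨ε, hε, h0⟩ := hx
  exact ⟨Metric.ball x ε, mem_nhdsWithin_of_mem_nhds (Metric.ball_mem_nhds x hε),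
    le_antisymm h0 zero_le⟩

/-- The natural filtration of the canonical process on `ℝ^Q`. -/
noncomputable def natFiltration (Q : Type*) [Preorder Q] :
    Filtration Q (MeasurableSpace.pi : MeasurableSpace (Q → ℝ)) where
  seq i := ⨆ t ∈ Set.Iic i, MeasurableSpace.comap (fun ω : Q → ℝ => ω t) inferInstance
  mono' i j hij := by
    refine iSup_le fun t => iSup_le fun ht => ?_
    exact le_iSup₂ (f := fun (t : Q) (_ : t ∈ Set.Iic j) =>
      MeasurableSpace.comap (fun ω : Q → ℝ => ω t) inferInstance) t (ht.trans hij)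
  le' i := by
    refine iSup_le fun t => iSup_le fun _ => ?_
    exact (measurable_pi_apply t).comap_le

/-- A measure `P` on `ℝ^Q` is Lipschitz-Markov if for all `s < t` in `Q` and every
`1`-Lipschitz `f` there is a `1`-Lipschitz `g` with `E_P[f(S_t) | F_s] = g(S_s)` a.s. -/
def LipschitzMarkov (Q : Set ℝ) (P : Measure (↥Q → ℝ)) : Prop :=
  ∀ s t : ↥Q, s < t → ∀ f : ℝ → ℝ, LipschitzWith 1 f →
    ∃ g : ℝ → ℝ, LipschitzWith 1 g ∧
      P[(fun ω : ↥Q → ℝ => f (ω t)) | natFiltration ↥Q s] =ᵐ[P] fun ω => g (ω s)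


theorem lipschitz_markov_iff_bilinear_fwd
    (Q : Set ℝ) [Countable ↥Q]
    (P : Measure (↥Q → ℝ)) [IsProbabilityMeasure P]
    (hmart : Martingale (fun (t : ↥Q) (ω : ↥Q → ℝ) => ω t) (natFiltration ↥Q) P)
    (hLM : LipschitzMarkov Q P) :
    (∀ f : ℝ → ℝ, LipschitzWith 1 f → ∀ s t : ↥Q, s < t →
      ∀ X Y : (↥Q → ℝ) → ℝ,
        Measurable[natFiltration ↥Q s] X → Measurable[natFiltration ↥Q s] Y →
        (∀ ω, 0 ≤ X ω) → (∀ ω, 0 ≤ Y ω) →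
        (∃ C, ∀ ω, X ω ≤ C) → (∃ C, ∀ ω, Y ω ≤ C) →
        (∫ ω, X ω * f (ω t) ∂P) * (∫ ω, Y ω ∂P) -
            (∫ ω, X ω ∂P) * (∫ ω, Y ω * f (ω t) ∂P) ≤
          ∫ p, X p.1 * Y p.2 * |p.1 s - p.2 s| ∂(P.prod P)) := by
  rintro f hf s t hst X Y hX hY hX0 hY0 ⟨Cx, hCx⟩ ⟨Cy, hCy⟩
  obtain ⟨g, hg, hge⟩ := hLM s t hst f hf
  have hm := (natFiltration ↥Q).le s
  have hts : Integrable (fun ω : ↥Q → ℝ => ω t) P := hmart.integrable t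
  have hss : Integrable (fun ω : ↥Q → ℝ => ω s) P := hmart.integrable s
  have hFint : Integrable (fun ω : ↥Q → ℝ => f (ω t)) P := integrable_lip_comp hf hts
  have hGint : Integrable (fun ω : ↥Q → ℝ => g (ω s)) P := integrable_lip_comp hg hss
  have hXb : ∀ ω, |X ω| ≤ Cx := fun ω => by rw [abs_of_nonneg (hX0 ω)]; exact hCx ω
  have hYb : ∀ ω, |Y ω| ≤ Cy := fun ω => by rw [abs_of_nonneg (hY0 ω)]; exact hCy ω
  have hXaesm : AEStronglyMeasurable X P :=
    ((hX.stronglyMeasurable).mono hm).aestronglyMeasurable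
  have hYaesm : AEStronglyMeasurable Y P :=
    ((hY.stronglyMeasurable).mono hm).aestronglyMeasurable
  have hXint : Integrable X P :=
    Integrable.mono' (integrable_const Cx) hXaesm (Eventually.of_forall fun ω => hXb ω)
  have hYint : Integrable Y P :=
    Integrable.mono' (integrable_const Cy) hYaesm (Eventually.of_forall fun ω => hYb ω)
  have hXG : Integrable (fun ω => X ω * g (ω s)) P := hGint.bdd_mul hXaesm (Eventually.of_forall hXb)
  have hYG : Integrable (fun ω => Y ω * g (ω s)) P := hGint.bdd_mul hYaesm (Eventually.of_forall hYb)
  have h1 : ∫ ω, X ω * f (ω t) ∂P = ∫ ω, X ω * g (ω s) ∂P := by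
    rw [integral_mul_condexp' hm hX hXb hFint]
    refine integral_congr_ae ?_
    filter_upwards [hge] with ω hω
    rw [hω]
  have h2 : ∫ ω, Y ω * f (ω t) ∂P = ∫ ω, Y ω * g (ω s) ∂P := by
    rw [integral_mul_condexp' hm hY hYb hFint]
    refine integral_congr_ae ?_
    filter_upwards [hge] with ω hω
    rw [hω]
  rw [h1, h2]
  have hp1 : (∫ ω, X ω * g (ω s) ∂P) * (∫ ω, Y ω ∂P) =
      ∫ p, (X p.1 * g (p.1 s)) * Y p.2 ∂(P.prod P) :=
    (integral_prod_mul (fun ω => X ω * g (ω s)) Y).symm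
  have hp2 : (∫ ω, X ω ∂P) * (∫ ω, Y ω * g (ω s) ∂P) =
      ∫ p, X p.1 * (Y p.2 * g (p.2 s)) ∂(P.prod P) :=
    (integral_prod_mul X (fun ω => Y ω * g (ω s))).symm
  have hint1 : Integrable (fun p : (↥Q → ℝ) × (↥Q → ℝ) => (X p.1 * g (p.1 s)) * Y p.2)
      (P.prod P) := hXG.mul_prod hYint
  have hint2 : Integrable (fun p : (↥Q → ℝ) × (↥Q → ℝ) => X p.1 * (Y p.2 * g (p.2 s)))
      (P.prod P) := hXint.mul_prod hYG
  rw [hp1, hp2, ← integral_sub hint1 hint2]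
  -- measurability of the RHS integrand
  have hXm0 : Measurable X := hX.mono hm le_rfl
  have hYm0 : Measurable Y := hY.mono hm le_rfl
  have hmeasR : Measurable (fun p : (↥Q → ℝ) × (↥Q → ℝ) => X p.1 * Y p.2 * |p.1 s - p.2 s|) := by
    refine ((hXm0.comp measurable_fst).mul (hYm0.comp measurable_snd)).mul ?_
    exact (((measurable_pi_apply s).comp measurable_fst).sub
      ((measurable_pi_apply s).comp measurable_snd)).abs
  have habs1 : Integrable (fun p : (↥Q → ℝ) × (↥Q → ℝ) => |p.1 s|) (P.prod P) := by
    simpa using hss.abs.mul_prod (integrable_const (1 : ℝ))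
  have habs2 : Integrable (fun p : (↥Q → ℝ) × (↥Q → ℝ) => |p.2 s|) (P.prod P) := by
    simpa using (integrable_const (1 : ℝ)).mul_prod hss.abs
  have hRint : Integrable (fun p : (↥Q → ℝ) × (↥Q → ℝ) => X p.1 * Y p.2 * |p.1 s - p.2 s|)
      (P.prod P) := by
    refine Integrable.mono' (((habs1.add habs2).const_mul (Cx * Cy)))
      hmeasR.aestronglyMeasurable (Eventually.of_forall fun p => ?_)
    have hX1 : 0 ≤ X p.1 := hX0 _
    have hY1 : 0 ≤ Y p.2 := hY0 _
    have hd : |p.1 s - p.2 s| ≤ |p.1 s| + |p.2 s| := abs_sub _ _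
    have hCx0 : 0 ≤ Cx := le_trans (hX0 p.1) (hCx p.1)
    have hCy0 : 0 ≤ Cy := le_trans (hY0 p.2) (hCy p.2)
    rw [Real.norm_eq_abs, abs_of_nonneg (by positivity)]
    calc X p.1 * Y p.2 * |p.1 s - p.2 s| ≤ Cx * Cy * |p.1 s - p.2 s| := by
          refine mul_le_mul_of_nonneg_right ?_ (abs_nonneg _)
          exact mul_le_mul (hCx _) (hCy _) hY1 hCx0
      _ ≤ Cx * Cy * (|p.1 s| + |p.2 s|) := by
          refine mul_le_mul_of_nonneg_left hd (by positivity)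
  refine integral_mono (hint1.sub hint2) hRint fun p => ?_
  have h5 : g (p.1 s) - g (p.2 s) ≤ |p.1 s - p.2 s| := by
    have h6 := hg.dist_le_mul (p.1 s) (p.2 s)
    rw [NNReal.coe_one, one_mul, Real.dist_eq, Real.dist_eq] at h6
    exact (abs_sub_le_iff.mp h6).1
  calc X p.1 * g (p.1 s) * Y p.2 - X p.1 * (Y p.2 * g (p.2 s))
      = X p.1 * Y p.2 * (g (p.1 s) - g (p.2 s)) := by ring
    _ ≤ X p.1 * Y p.2 * |p.1 s - p.2 s| :=
        mul_le_mul_of_nonneg_left h5 (mul_nonneg (hX0 _) (hY0 _))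

theorem lipschitz_markov_iff_bilinear_bwd
    (Q : Set ℝ) [Countable ↥Q]
    (P : Measure (↥Q → ℝ)) [IsProbabilityMeasure P]
    (hmart : Martingale (fun (t : ↥Q) (ω : ↥Q → ℝ) => ω t) (natFiltration ↥Q) P)
    (hB : ∀ f : ℝ → ℝ, LipschitzWith 1 f → ∀ s t : ↥Q, s < t →
      ∀ X Y : (↥Q → ℝ) → ℝ,
        Measurable[natFiltration ↥Q s] X → Measurable[natFiltration ↥Q s] Y →
        (∀ ω, 0 ≤ X ω) → (∀ ω, 0 ≤ Y ω) →
        (∃ C, ∀ ω, X ω ≤ C) → (∃ C, ∀ ω, Y ω ≤ C) →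
        (∫ ω, X ω * f (ω t) ∂P) * (∫ ω, Y ω ∂P) -
            (∫ ω, X ω ∂P) * (∫ ω, Y ω * f (ω t) ∂P) ≤
          ∫ p, X p.1 * Y p.2 * |p.1 s - p.2 s| ∂(P.prod P)) :
    LipschitzMarkov Q P := by
  intro s t hst f hf
  have hm := (natFiltration ↥Q).le s
  have hFint : Integrable (fun ω : ↥Q → ℝ => f (ω t)) P :=
    integrable_lip_comp hf (hmart.integrable t)
  have hss : Integrable (fun ω : ↥Q → ℝ => ω s) P := hmart.integrable s
  set h : (↥Q → ℝ) → ℝ := P[(fun ω : ↥Q → ℝ => f (ω t)) | natFiltration ↥Q s] with hhdef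
  have hhint : Integrable h P := integrable_condExp
  have hhsm : StronglyMeasurable[natFiltration ↥Q s] h := stronglyMeasurable_condExp
  have hhm : Measurable[natFiltration ↥Q s] h := hhsm.measurable
  have hsm : Measurable[natFiltration ↥Q s] (fun ω : ↥Q → ℝ => ω s) := by
    refine measurable_iff_comap_le.mpr ?_
    exact le_iSup₂ (f := fun (r : ↥Q) (_ : r ∈ Set.Iic s) =>
      MeasurableSpace.comap (fun ω : ↥Q → ℝ => ω r) inferInstance) s (le_refl s)
  set T : (↥Q → ℝ) → ℝ × ℝ := fun ω => (ω s, h ω) with hTdef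
  have hTm : Measurable[natFiltration ↥Q s] T := hsm.prodMk hhm
  have hTm0 : Measurable T := hTm.mono hm le_rfl
  set κ : Measure (ℝ × ℝ) := P.map T with hκdef
  haveI : IsProbabilityMeasure κ := Measure.isProbabilityMeasure_map hTm0.aemeasurable
  set S : Set (ℝ × ℝ) := {p | ∀ ε : ℝ, 0 < ε → 0 < κ (Metric.ball p ε)} with hSdef
  have hSc : κ Sᶜ = 0 := by
    have h0 := ae_mem_supp κ
    have h1 : Sᶜ = {p | ¬ ∀ ε : ℝ, 0 < ε → 0 < κ (Metric.ball p ε)} := rfl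
    rw [h1]; exact h0
  have hmap : ∀ (B : Set (ℝ × ℝ)), MeasurableSet B → κ B = P (T ⁻¹' B) := fun B hBm =>
    Measure.map_apply hTm0 hBm
  -- integrability of |coordinate| on the product
  have habs1 : Integrable (fun p : (↥Q → ℝ) × (↥Q → ℝ) => |p.1 s|) (P.prod P) := by
    simpa using hss.abs.mul_prod (integrable_const (1 : ℝ))
  have habs2 : Integrable (fun p : (↥Q → ℝ) × (↥Q → ℝ) => |p.2 s|) (P.prod P) := by
    simpa using (integrable_const (1 : ℝ)).mul_prod hss.abs
  -- Claim A
  have claimA : ∀ p ∈ S, ∀ q ∈ S, p.2 - q.2 ≤ |p.1 - q.1| := by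
    intro p hp q hq
    have key : ∀ ε : ℝ, 0 < ε → p.2 - q.2 ≤ |p.1 - q.1| + 4 * ε := by
      intro ε hε
      set A : Set (↥Q → ℝ) := T ⁻¹' (Metric.ball p ε) with hAdef
      set B : Set (↥Q → ℝ) := T ⁻¹' (Metric.ball q ε) with hBdef
      have hAms : MeasurableSet[natFiltration ↥Q s] A := hTm Metric.isOpen_ball.measurableSet
      have hBms : MeasurableSet[natFiltration ↥Q s] B := hTm Metric.isOpen_ball.measurableSet
      set X : (↥Q → ℝ) → ℝ := A.indicator 1 with hXdef
      set Y : (↥Q → ℝ) → ℝ := B.indicator 1 with hYdef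
      have hXm : Measurable[natFiltration ↥Q s] X := measurable_const.indicator hAms
      have hYm : Measurable[natFiltration ↥Q s] Y := measurable_const.indicator hBms
      have hX0 : ∀ ω, 0 ≤ X ω := fun ω => Set.indicator_nonneg (fun _ _ => zero_le_one) ω
      have hY0 : ∀ ω, 0 ≤ Y ω := fun ω => Set.indicator_nonneg (fun _ _ => zero_le_one) ω
      have hX1 : ∀ ω, X ω ≤ 1 := fun ω => by
        by_cases hω : ω ∈ A <;> simp [hXdef, hω]
      have hY1 : ∀ ω, Y ω ≤ 1 := fun ω => by
        by_cases hω : ω ∈ B <;> simp [hYdef, hω]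
      have hXb : ∀ ω, |X ω| ≤ 1 := fun ω => by rw [abs_of_nonneg (hX0 ω)]; exact hX1 ω
      have hYb : ∀ ω, |Y ω| ≤ 1 := fun ω => by rw [abs_of_nonneg (hY0 ω)]; exact hY1 ω
      have hXaesm : AEStronglyMeasurable X P :=
        ((hXm.stronglyMeasurable).mono hm).aestronglyMeasurable
      have hYaesm : AEStronglyMeasurable Y P :=
        ((hYm.stronglyMeasurable).mono hm).aestronglyMeasurable
      have hXint : Integrable X P :=
        Integrable.mono' (integrable_const 1) hXaesm (Filter.Eventually.of_forall hXb)
      have hYint : Integrable Y P :=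
        Integrable.mono' (integrable_const 1) hYaesm (Filter.Eventually.of_forall hYb)
      have ineq := hB f hf s t hst X Y hXm hYm hX0 hY0 ⟨1, hX1⟩ ⟨1, hY1⟩
      have hXf : ∫ ω, X ω * f (ω t) ∂P = ∫ ω, X ω * h ω ∂P :=
        integral_mul_condexp' hm hXm hXb hFint
      have hYf : ∫ ω, Y ω * f (ω t) ∂P = ∫ ω, Y ω * h ω ∂P :=
        integral_mul_condexp' hm hYm hYb hFint
      rw [hXf, hYf] at ineq
      set aX : ℝ := ∫ ω, X ω ∂P with haXdef
      set bY : ℝ := ∫ ω, Y ω ∂P with hbYdef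
      have haX : 0 < aX := by
        have h1 : aX = (P A).toReal := integral_indicator_one (hm _ hAms)
        rw [h1]
        refine ENNReal.toReal_pos ?_ (measure_ne_top _ _)
        have h2 : 0 < κ (Metric.ball p ε) := hp ε hε
        rw [hmap _ Metric.isOpen_ball.measurableSet] at h2
        exact h2.ne'
      have hbY : 0 < bY := by
        have h1 : bY = (P B).toReal := integral_indicator_one (hm _ hBms)
        rw [h1]
        refine ENNReal.toReal_pos ?_ (measure_ne_top _ _)
        have h2 : 0 < κ (Metric.ball q ε) := hq ε hε
        rw [hmap _ Metric.isOpen_ball.measurableSet] at h2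
        exact h2.ne'
      have hXh_int : Integrable (fun ω => X ω * h ω) P := hhint.bdd_mul hXaesm (Eventually.of_forall hXb)
      have hYh_int : Integrable (fun ω => Y ω * h ω) P := hhint.bdd_mul hYaesm (Eventually.of_forall hYb)
      have hlow : (p.2 - ε) * aX ≤ ∫ ω, X ω * h ω ∂P := by
        rw [haXdef, ← integral_const_mul]
        refine integral_mono (hXint.const_mul _) hXh_int fun ω => ?_
        by_cases hω : ω ∈ A
        · have hd : dist (T ω) p < ε := by
            have h3 : T ω ∈ Metric.ball p ε := hω
            rwa [Metric.mem_ball] at h3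
          have hd2 : |h ω - p.2| < ε := by
            have h3 : dist (h ω) p.2 ≤ dist (T ω) p := by
              rw [Prod.dist_eq]; exact le_max_right _ _
            rw [Real.dist_eq] at h3
            exact lt_of_le_of_lt h3 hd
          have hXω : X ω = 1 := Set.indicator_of_mem hω _
          have h4 := abs_lt.mp hd2
          simp only [hXω, mul_one, one_mul]
          linarith [h4.1]
        · have hXω : X ω = 0 := Set.indicator_of_notMem hω _
          simp [hXω]
      have hup : ∫ ω, Y ω * h ω ∂P ≤ (q.2 + ε) * bY := by
        rw [hbYdef, ← integral_const_mul]
        refine integral_mono hYh_int (hYint.const_mul _) fun ω => ?_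
        by_cases hω : ω ∈ B
        · have hd : dist (T ω) q < ε := by
            have h3 : T ω ∈ Metric.ball q ε := hω
            rwa [Metric.mem_ball] at h3
          have hd2 : |h ω - q.2| < ε := by
            have h3 : dist (h ω) q.2 ≤ dist (T ω) q := by
              rw [Prod.dist_eq]; exact le_max_right _ _
            rw [Real.dist_eq] at h3
            exact lt_of_le_of_lt h3 hd
          have hYω : Y ω = 1 := Set.indicator_of_mem hω _
          have h4 := abs_lt.mp hd2
          simp only [hYω, mul_one, one_mul]
          linarith [h4.2]
        · have hYω : Y ω = 0 := Set.indicator_of_notMem hω _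
          simp [hYω]
      -- bound on the right-hand side
      have hXm0 : Measurable X := hXm.mono hm le_rfl
      have hYm0 : Measurable Y := hYm.mono hm le_rfl
      have hmeasR : Measurable
          (fun pr : (↥Q → ℝ) × (↥Q → ℝ) => X pr.1 * Y pr.2 * |pr.1 s - pr.2 s|) := by
        refine ((hXm0.comp measurable_fst).mul (hYm0.comp measurable_snd)).mul ?_
        exact (((measurable_pi_apply s).comp measurable_fst).sub
          ((measurable_pi_apply s).comp measurable_snd)).abs
      have hRint : Integrable
          (fun pr : (↥Q → ℝ) × (↥Q → ℝ) => X pr.1 * Y pr.2 * |pr.1 s - pr.2 s|) (P.prod P) := by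
        refine Integrable.mono' (habs1.add habs2) hmeasR.aestronglyMeasurable
          (Filter.Eventually.of_forall fun pr => ?_)
        have hd : |pr.1 s - pr.2 s| ≤ |pr.1 s| + |pr.2 s| := abs_sub _ _
        rw [Real.norm_eq_abs, abs_of_nonneg
          (mul_nonneg (mul_nonneg (hX0 _) (hY0 _)) (abs_nonneg _))]
        calc X pr.1 * Y pr.2 * |pr.1 s - pr.2 s| ≤ 1 * 1 * |pr.1 s - pr.2 s| := by
              refine mul_le_mul ?_ le_rfl (abs_nonneg _) (by norm_num)
              exact mul_le_mul (hX1 _) (hY1 _) (hY0 _) zero_le_one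
          _ ≤ |pr.1 s| + |pr.2 s| := by rw [one_mul, one_mul]; exact hd
      have hconst : Integrable
          (fun pr : (↥Q → ℝ) × (↥Q → ℝ) => (|p.1 - q.1| + 2 * ε) * (X pr.1 * Y pr.2))
          (P.prod P) := (hXint.mul_prod hYint).const_mul _
      have hRbound : ∫ pr, X pr.1 * Y pr.2 * |pr.1 s - pr.2 s| ∂(P.prod P) ≤
          (|p.1 - q.1| + 2 * ε) * (aX * bY) := by
        have hmono : ∫ pr, X pr.1 * Y pr.2 * |pr.1 s - pr.2 s| ∂(P.prod P) ≤
            ∫ pr, (|p.1 - q.1| + 2 * ε) * (X pr.1 * Y pr.2) ∂(P.prod P) := by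
          refine integral_mono hRint hconst fun pr => ?_
          by_cases h1 : pr.1 ∈ A
          · by_cases h2 : pr.2 ∈ B
            · have hX1' : X pr.1 = 1 := Set.indicator_of_mem h1 _
              have hY1' : Y pr.2 = 1 := Set.indicator_of_mem h2 _
              have hda : |pr.1 s - p.1| < ε := by
                have h3 : dist (pr.1 s) p.1 ≤ dist (T pr.1) p := by
                  rw [Prod.dist_eq]; exact le_max_left _ _
                have h4 : dist (T pr.1) p < ε := by
                  have h5 : T pr.1 ∈ Metric.ball p ε := h1
                  rwa [Metric.mem_ball] at h5
                rw [Real.dist_eq] at h3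
                exact lt_of_le_of_lt h3 h4
              have hdb : |pr.2 s - q.1| < ε := by
                have h3 : dist (pr.2 s) q.1 ≤ dist (T pr.2) q := by
                  rw [Prod.dist_eq]; exact le_max_left _ _
                have h4 : dist (T pr.2) q < ε := by
                  have h5 : T pr.2 ∈ Metric.ball q ε := h2
                  rwa [Metric.mem_ball] at h5
                rw [Real.dist_eq] at h3
                exact lt_of_le_of_lt h3 h4
              have htri : |pr.1 s - pr.2 s| ≤
                  |pr.1 s - p.1| + |p.1 - q.1| + |q.1 - pr.2 s| := by
                have t1 : |pr.1 s - pr.2 s| ≤ |pr.1 s - q.1| + |q.1 - pr.2 s| :=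
                  abs_sub_le _ _ _
                have t2 : |pr.1 s - q.1| ≤ |pr.1 s - p.1| + |p.1 - q.1| := abs_sub_le _ _ _
                linarith
              have hq1 : |q.1 - pr.2 s| = |pr.2 s - q.1| := abs_sub_comm _ _
              rw [hX1', hY1']
              simp only [one_mul, mul_one]
              linarith
            · have hY0' : Y pr.2 = 0 := Set.indicator_of_notMem h2 _
              simp [hY0']
          · have hX0' : X pr.1 = 0 := Set.indicator_of_notMem h1 _
            simp [hX0']
        rw [integral_const_mul, integral_prod_mul] at hmono
        exact hmono
      -- combine everything
      have hstep1 : (p.2 - ε) * aX * bY ≤ (∫ ω, X ω * h ω ∂P) * bY :=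
        mul_le_mul_of_nonneg_right hlow hbY.le
      have hstep2 : aX * (∫ ω, Y ω * h ω ∂P) ≤ aX * ((q.2 + ε) * bY) :=
        mul_le_mul_of_nonneg_left hup haX.le
      have hchain : (p.2 - ε) * aX * bY - aX * ((q.2 + ε) * bY) ≤
          (|p.1 - q.1| + 2 * ε) * (aX * bY) := by
        calc (p.2 - ε) * aX * bY - aX * ((q.2 + ε) * bY) ≤
            (∫ ω, X ω * h ω ∂P) * bY - aX * (∫ ω, Y ω * h ω ∂P) := by linarith
          _ ≤ ∫ pr, X pr.1 * Y pr.2 * |pr.1 s - pr.2 s| ∂(P.prod P) := ineq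
          _ ≤ (|p.1 - q.1| + 2 * ε) * (aX * bY) := hRbound
      have hfactor : (p.2 - q.2 - 2 * ε) * (aX * bY) ≤
          (|p.1 - q.1| + 2 * ε) * (aX * bY) := by
        refine le_trans (le_of_eq (by ring)) hchain
      have hdiv := le_of_mul_le_mul_right
        (by linarith [hfactor] : (p.2 - q.2 - 2 * ε) * (aX * bY) ≤
          (|p.1 - q.1| + 2 * ε) * (aX * bY)) (mul_pos haX hbY)
      linarith
    by_contra hcon
    push_neg at hcon
    have := key ((p.2 - q.2 - |p.1 - q.1|) / 8) (by linarith)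
    linarith
  -- S is closed
  have hSclosed : IsClosed S := by
    rw [← isOpen_compl_iff, Metric.isOpen_iff]
    intro x hx
    simp only [hSdef, mem_compl_iff, mem_setOf_eq, not_forall, not_lt] at hx
    obtain ⟨ε, hε, h0⟩ := hx
    refine ⟨ε / 2, by positivity, fun y hy => ?_⟩
    intro hyS
    have hpos : 0 < κ (Metric.ball y (ε / 2)) := hyS (ε / 2) (by positivity)
    refine absurd hpos (not_lt.mpr ?_)
    refine le_trans (measure_mono (Metric.ball_subset_ball' ?_)) h0
    rw [Metric.mem_ball] at hy
    linarith [hy]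
  -- S is nonempty
  have hSne : S.Nonempty := by
    rw [Set.nonempty_iff_ne_empty]
    intro hSe
    have : κ Sᶜ = 1 := by rw [hSe, Set.compl_empty]; exact measure_univ
    rw [hSc] at this
    exact zero_ne_one this
  obtain ⟨g, hglip, hgval⟩ := exists_lip_extension S hSne claimA
  refine ⟨g, hglip, ?_⟩
  have hTae : ∀ᵐ ω ∂P, T ω ∈ S := by
    have h0 : P (T ⁻¹' Sᶜ) = 0 := by
      rw [← hmap _ hSclosed.measurableSet.compl]; exact hSc
    rw [ae_iff]
    convert h0 using 2
    rfl
  filter_upwards [hTae] with ω hω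
  exact (hgval (T ω) hω).symm

/-- a martingale measure `P` on `ℝ^Q` is Lipschitz-Markov iff for all
`1`-Lipschitz `f`, all `s < t` in `Q` and all non-negative bounded `F_s`-measurable
`X, Y`, one has
`E[X f(S_t)]·E[Y] − E[X]·E[Y f(S_t)] ≤ ∫∫ X(ω) Y(ω̄) |ω_s − ω̄_s| d(P ⊗ P)`. -/
theorem lipschitz_markov_iff_bilinear
    (Q : Set ℝ) [Countable ↥Q]
    (P : Measure (↥Q → ℝ)) [IsProbabilityMeasure P]
    (hmart : Martingale (fun (t : ↥Q) (ω : ↥Q → ℝ) => ω t) (natFiltration ↥Q) P) :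
    LipschitzMarkov Q P ↔
    (∀ f : ℝ → ℝ, LipschitzWith 1 f → ∀ s t : ↥Q, s < t →
      ∀ X Y : (↥Q → ℝ) → ℝ,
        Measurable[natFiltration ↥Q s] X → Measurable[natFiltration ↥Q s] Y →
        (∀ ω, 0 ≤ X ω) → (∀ ω, 0 ≤ Y ω) →
        (∃ C, ∀ ω, X ω ≤ C) → (∃ C, ∀ ω, Y ω ≤ C) →
        (∫ ω, X ω * f (ω t) ∂P) * (∫ ω, Y ω ∂P) -
            (∫ ω, X ω ∂P) * (∫ ω, Y ω * f (ω t) ∂P) ≤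
          ∫ p, X p.1 * Y p.2 * |p.1 s - p.2 s| ∂(P.prod P)) := by
  exact ⟨lipschitz_markov_iff_bilinear_fwd Q P hmart, lipschitz_markov_iff_bilinear_bwd Q P hmart⟩
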